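/- arXiv:2502.01381 — 2 statements merged into one kernel-verified Lean document; each statement's English description precedes it below -/
import Mathlib

section
/- There exists a subset S ⊆ W such that d(S, G_1) = d(S, G_2) and d(S, G_1) + d(S, G_2) = (k − 1)/2 if and only if H contains a k-clique. -/
open Finset


/-- Number of edges of `G` with both endpoints in `S`. -/
noncomputable def edgeCnt {W : Type*} (G : SimpleGraph W) (S : Finset W) : ℕ :=
  {e ∈ G.edgeSet | ∀ v ∈ e, v ∈ S}.ncard

/-- Density of the subgraph induced by `S` in `G`. -/
noncomputable def dens {W : Type*} (G : SimpleGraph W) (S : Finset W) : ℝ :=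
  (edgeCnt G S : ℝ) / (S.card : ℝ)

/-- The first snapshot: a copy of `H` on the `inl` vertices, the `k` new
vertices being isolated. -/
def G1 {VH : Type*} (H : SimpleGraph VH) (k : ℕ) : SimpleGraph (VH ⊕ Fin k) :=
  SimpleGraph.fromRel (fun a b => ∃ u v, a = Sum.inl u ∧ b = Sum.inl v ∧ H.Adj u v)

/-- The second snapshot: a `k`-clique on the `inr` vertices, the vertices of
`VH` being isolated. -/
def G2 (VH : Type*) (k : ℕ) : SimpleGraph (VH ⊕ Fin k) :=
  SimpleGraph.fromRel (fun a b => ∃ i j : Fin k, a = Sum.inr i ∧ b = Sum.inr j)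

lemma edgeCnt_eq_card {W : Type*} [DecidableEq W] (G : SimpleGraph W)
    [DecidableRel G.Adj] (S : Finset W) :
    edgeCnt G S = (S.sym2.filter (fun e => e ∈ G.edgeSet)).card := by
  rw [edgeCnt, ← Set.ncard_coe_finset]
  congr 1
  ext e
  simp only [Set.mem_setOf_eq, Finset.coe_filter, Finset.mem_sym2_iff]
  tauto

lemma card_filter_notDiag {α : Type*} [DecidableEq α] (t : Finset α) :
    (t.sym2.filter (fun e => ¬ e.IsDiag)).card = t.card.choose 2 := by
  rw [Finset.sym2_eq_image, Sym2.filter_image_mk_not_isDiag, Sym2.card_image_offDiag]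

lemma G1_adj {VH : Type*} (H : SimpleGraph VH) (k : ℕ) (a b : VH ⊕ Fin k) :
    (G1 H k).Adj a b ↔ ∃ u v, a = Sum.inl u ∧ b = Sum.inl v ∧ H.Adj u v := by
  constructor
  · rintro ⟨hne, (⟨u, v, rfl, rfl, h⟩ | ⟨u, v, rfl, rfl, h⟩)⟩
    · exact ⟨u, v, rfl, rfl, h⟩
    · exact ⟨v, u, rfl, rfl, h.symm⟩
  · rintro ⟨u, v, rfl, rfl, h⟩
    exact ⟨by simpa using H.ne_of_adj h, Or.inl ⟨u, v, rfl, rfl, h⟩⟩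

lemma G2_adj (VH : Type*) (k : ℕ) (a b : VH ⊕ Fin k) :
    (G2 VH k).Adj a b ↔ ∃ i j : Fin k, a = Sum.inr i ∧ b = Sum.inr j ∧ i ≠ j := by
  constructor
  · rintro ⟨hne, (⟨i, j, rfl, rfl⟩ | ⟨i, j, rfl, rfl⟩)⟩
    · exact ⟨i, j, rfl, rfl, by simpa using hne⟩
    · refine ⟨j, i, rfl, rfl, fun h => hne ?_⟩; simp [h]
  · rintro ⟨i, j, rfl, rfl, h⟩
    exact ⟨by simpa using h, Or.inl ⟨i, j, rfl, rfl⟩⟩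

lemma edgeCnt_G2 {VH : Type*} [DecidableEq VH] (k : ℕ) (S : Finset (VH ⊕ Fin k)) :
    edgeCnt (G2 VH k) S = (S.toRight.card).choose 2 := by
  classical
  rw [edgeCnt_eq_card, ← card_filter_notDiag S.toRight]
  have himg : S.sym2.filter (fun e => e ∈ (G2 VH k).edgeSet)
      = (S.toRight.sym2.filter (fun e => ¬ e.IsDiag)).image (Sym2.map Sum.inr) := by
    ext e
    induction e using Sym2.ind with
    | _ x y =>
      simp only [mem_filter, Finset.mk_mem_sym2_iff, SimpleGraph.mem_edgeSet, mem_image]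
      constructor
      · rintro ⟨⟨hx, hy⟩, hadj⟩
        rw [G2_adj] at hadj
        obtain ⟨i, j, rfl, rfl, hij⟩ := hadj
        refine ⟨s(i, j), ?_, by rw [Sym2.map_pair_eq]⟩
        simp only [mem_filter, Finset.mk_mem_sym2_iff, Finset.mem_toRight, Sym2.mk_isDiag_iff]
        exact ⟨⟨hx, hy⟩, hij⟩
      · rintro ⟨e', he', heq⟩
        induction e' using Sym2.ind with
        | _ i j =>
          rw [Sym2.map_pair_eq, Sym2.eq_iff] at heq
          simp only [mem_filter, Finset.mk_mem_sym2_iff, Finset.mem_toRight,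
            Sym2.mk_isDiag_iff] at he'
          obtain ⟨⟨hi, hj⟩, hij⟩ := he'
          rcases heq with ⟨rfl, rfl⟩ | ⟨rfl, rfl⟩
          · exact ⟨⟨hi, hj⟩, (G2_adj _ _ _ _).2 ⟨i, j, rfl, rfl, hij⟩⟩
          · exact ⟨⟨hj, hi⟩, (G2_adj _ _ _ _).2 ⟨j, i, rfl, rfl, fun h => hij h.symm⟩⟩
  rw [himg, card_image_of_injective _ (Sym2.map.injective Sum.inr_injective)]

lemma edgeCnt_G1 {VH : Type*} [DecidableEq VH] (H : SimpleGraph VH) (k : ℕ)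
    [DecidableRel H.Adj] (S : Finset (VH ⊕ Fin k)) :
    edgeCnt (G1 H k) S = (S.toLeft.sym2.filter (fun e => e ∈ H.edgeSet)).card := by
  classical
  rw [edgeCnt_eq_card]
  have himg : S.sym2.filter (fun e => e ∈ (G1 H k).edgeSet)
      = (S.toLeft.sym2.filter (fun e => e ∈ H.edgeSet)).image (Sym2.map Sum.inl) := by
    ext e
    induction e using Sym2.ind with
    | _ x y =>
      simp only [mem_filter, Finset.mk_mem_sym2_iff, SimpleGraph.mem_edgeSet, mem_image]
      constructor
      · rintro ⟨⟨hx, hy⟩, hadj⟩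
        rw [G1_adj] at hadj
        obtain ⟨u, v, rfl, rfl, huv⟩ := hadj
        refine ⟨s(u, v), ?_, by rw [Sym2.map_pair_eq]⟩
        simp only [mem_filter, Finset.mk_mem_sym2_iff, Finset.mem_toLeft,
          SimpleGraph.mem_edgeSet]
        exact ⟨⟨hx, hy⟩, huv⟩
      · rintro ⟨e', he', heq⟩
        induction e' using Sym2.ind with
        | _ u v =>
          rw [Sym2.map_pair_eq, Sym2.eq_iff] at heq
          simp only [mem_filter, Finset.mk_mem_sym2_iff, Finset.mem_toLeft,
            SimpleGraph.mem_edgeSet] at he'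
          obtain ⟨⟨hu, hv⟩, huv⟩ := he'
          rcases heq with ⟨rfl, rfl⟩ | ⟨rfl, rfl⟩
          · exact ⟨⟨hu, hv⟩, (G1_adj _ _ _ _).2 ⟨u, v, rfl, rfl, huv⟩⟩
          · exact ⟨⟨hv, hu⟩, (G1_adj _ _ _ _).2 ⟨v, u, rfl, rfl, huv.symm⟩⟩
  rw [himg, card_image_of_injective _ (Sym2.map.injective Sum.inl_injective)]

lemma two_mul_choose_two (n : ℕ) : 2 * n.choose 2 = n * (n - 1) := by
  cases n with
  | zero => simp
  | succ m =>
    rw [Nat.choose_two_right, Nat.succ_sub_one]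
    rw [Nat.mul_div_cancel' ]
    rcases Nat.even_or_odd m with h | h
    · exact Dvd.dvd.mul_left h.two_dvd _
    · exact Dvd.dvd.mul_right (Nat.even_add_one.2 (Nat.not_even_iff_odd.2 h)).two_dvd _

lemma key_arith (a b k : ℕ) (hk : 2 ≤ k) (hbk : b ≤ k) (hab : 0 < a + b)
    (hle : b * (b - 1) ≤ a * (a - 1))
    (heq : 2 * (b * (b - 1)) = (k - 1) * (a + b)) :
    a = k ∧ b = k := by
  rcases Nat.lt_or_ge b 2 with hb | hb
  · interval_cases b <;> simp_all <;> omega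
  · have ha : 2 ≤ a := by
      by_contra h
      push_neg at h
      interval_cases a <;> simp_all <;> omega
    zify [show 1 ≤ a by omega, show 1 ≤ b by omega, show 1 ≤ k by omega] at hle heq ⊢
    have hba : (b : ℤ) ≤ a := by
      by_contra h
      push_neg at h
      nlinarith [mul_pos (show (0:ℤ) < b - a by omega) (show (0:ℤ) < b + a - 1 by omega)]
    have hkb : (k : ℤ) ≤ b := by
      by_contra h
      push_neg at h
      nlinarith [show (0:ℤ) < b by omega]
    have hbk2 : b = k := by omega
    subst hbk2
    have h2 : ((b:ℤ) - 1) * ((a:ℤ) + b) = ((b:ℤ) - 1) * (2 * b) := by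
      linear_combination -heq
    have := mul_left_cancel₀ (show (b:ℤ) - 1 ≠ 0 by omega) h2
    omega

theorem stmt16 {VH : Type*} [Fintype VH] [DecidableEq VH]
    (H : SimpleGraph VH) (k : ℕ) (hk : 2 ≤ k) :
    (∃ S : Finset (VH ⊕ Fin k),
        dens (G1 H k) S = dens (G2 VH k) S ∧
        dens (G1 H k) S + dens (G2 VH k) S = ((k : ℝ) - 1) / 2) ↔
    (∃ C : Finset VH, H.IsNClique k C) := by
  classical
  have hc1 : ((k - 1 : ℕ) : ℝ) = (k : ℝ) - 1 := by
    push_cast [Nat.cast_sub (show 1 ≤ k by omega)]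
    ring
  constructor
  · rintro ⟨S, h1, h2⟩
    have hcard : S.toLeft.card + S.toRight.card = S.card :=
      Finset.card_toLeft_add_card_toRight
    have hm1 : edgeCnt (G1 H k) S = (S.toLeft.sym2.filter (fun e => e ∈ H.edgeSet)).card :=
      edgeCnt_G1 H k S
    have hm2 : edgeCnt (G2 VH k) S = (S.toRight.card).choose 2 := edgeCnt_G2 k S
    have hk2 : (2:ℝ) ≤ (k:ℝ) := by exact_mod_cast hk
    have hn : S.card ≠ 0 := by
      intro h
      rw [_root_.dens, _root_.dens, h] at h2
      norm_num at h2
      linarith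
    have hn' : (S.card : ℝ) ≠ 0 := Nat.cast_ne_zero.2 hn
    rw [_root_.dens, _root_.dens, ← add_div, div_eq_div_iff hn' two_ne_zero, ← hc1] at h2
    have hNm : (edgeCnt (G1 H k) S + edgeCnt (G2 VH k) S) * 2 = (k - 1) * S.card := by
      exact_mod_cast h2
    rw [_root_.dens, _root_.dens, div_eq_div_iff hn' hn'] at h1
    have h1' : edgeCnt (G1 H k) S = edgeCnt (G2 VH k) S := by
      have := mul_right_cancel₀ hn' h1
      exact_mod_cast this
    have hmb : (S.toLeft.sym2.filter (fun e => e ∈ H.edgeSet)).card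
        = (S.toRight.card).choose 2 := by rw [← hm1, h1', hm2]
    have hsub : (S.toLeft.sym2.filter (fun e => e ∈ H.edgeSet))
        ⊆ (S.toLeft.sym2.filter (fun e => ¬ e.IsDiag)) := by
      intro e he
      rw [Finset.mem_filter] at he ⊢
      exact ⟨he.1, H.not_isDiag_of_mem_edgeSet he.2⟩
    have hle1 : (S.toRight.card).choose 2 ≤ (S.toLeft.card).choose 2 := by
      rw [← hmb, ← card_filter_notDiag]
      exact Finset.card_le_card hsub
    have hbk : S.toRight.card ≤ k := by
      simpa using Finset.card_le_univ S.toRight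
    have hle : S.toRight.card * (S.toRight.card - 1)
        ≤ S.toLeft.card * (S.toLeft.card - 1) := by
      rw [← two_mul_choose_two, ← two_mul_choose_two]
      exact Nat.mul_le_mul_left 2 hle1
    have heqn : 2 * (S.toRight.card * (S.toRight.card - 1))
        = (k - 1) * (S.toLeft.card + S.toRight.card) := by
      calc 2 * (S.toRight.card * (S.toRight.card - 1))
          = ((S.toRight.card).choose 2 + (S.toRight.card).choose 2) * 2 := by
            rw [← two_mul_choose_two]; ring
        _ = (edgeCnt (G1 H k) S + edgeCnt (G2 VH k) S) * 2 := by
            rw [hm1, hmb, hm2]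
        _ = (k - 1) * S.card := hNm
        _ = (k - 1) * (S.toLeft.card + S.toRight.card) := by rw [hcard]
    obtain ⟨hak, hbk'⟩ := key_arith S.toLeft.card S.toRight.card k hk hbk
      (by omega) hle heqn
    have hfull : (S.toLeft.sym2.filter (fun e => e ∈ H.edgeSet))
        = (S.toLeft.sym2.filter (fun e => ¬ e.IsDiag)) := by
      apply Finset.eq_of_subset_of_card_le hsub
      rw [card_filter_notDiag, hmb, hak, hbk']
    refine ⟨S.toLeft, ?_, hak⟩
    intro u hu v hv hne
    have hmem : s(u, v) ∈ S.toLeft.sym2.filter (fun e => ¬ e.IsDiag) := by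
      rw [Finset.mem_filter, Finset.mk_mem_sym2_iff]
      exact ⟨⟨hu, hv⟩, by simpa [Sym2.mk_isDiag_iff] using hne⟩
    rw [← hfull, Finset.mem_filter] at hmem
    exact (SimpleGraph.mem_edgeSet H).1 hmem.2
  · rintro ⟨C, hC⟩
    set S : Finset (VH ⊕ Fin k) :=
      C.image Sum.inl ∪ Finset.univ.image Sum.inr with hS
    have hL : S.toLeft = C := by
      ext u; simp [hS]
    have hR : S.toRight = (Finset.univ : Finset (Fin k)) := by
      ext i; simp [hS]
    have hSc : S.card = k + k := by
      rw [← Finset.card_toLeft_add_card_toRight, hL, hR, hC.2, Finset.card_fin]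
    have hm2 : edgeCnt (G2 VH k) S = k.choose 2 := by
      rw [edgeCnt_G2, hR, Finset.card_fin]
    have hm1 : edgeCnt (G1 H k) S = k.choose 2 := by
      rw [edgeCnt_G1, hL]
      have hflt : C.sym2.filter (fun e => e ∈ H.edgeSet)
          = C.sym2.filter (fun e => ¬ e.IsDiag) := by
        apply Finset.filter_congr
        intro e he
        induction e using Sym2.ind with
        | _ x y =>
          rw [Finset.mk_mem_sym2_iff] at he
          simp only [SimpleGraph.mem_edgeSet, Sym2.mk_isDiag_iff]
          constructor
          · exact fun h => H.ne_of_adj h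
          · exact fun h => hC.1 (Finset.mem_coe.2 he.1) (Finset.mem_coe.2 he.2) h
      rw [hflt, card_filter_notDiag, hC.2]
    refine ⟨S, ?_, ?_⟩
    · rw [_root_.dens, _root_.dens, hm1, hm2]
    · rw [_root_.dens, _root_.dens, hm1, hm2, hSc]
      have h2c : (2:ℝ) * (k.choose 2 : ℝ) = (k:ℝ) * ((k:ℝ) - 1) := by
        have h' := congrArg (Nat.cast : ℕ → ℝ) (two_mul_choose_two k)
        push_cast [Nat.cast_sub (show 1 ≤ k by omega)] at h'
        linarith
      have hkR : (0:ℝ) < (k:ℝ) := by exact_mod_cast (show 0 < k by omega)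
      rw [← add_div]
      push_cast
      rw [div_eq_div_iff (by linarith) two_ne_zero]
      linear_combination 2 * h2c
end

section
/- If C ⊆ V_H is a k-clique in H, then the set S = {inl v : v ∈ C} ∪ {inr i : i ∈ Fin k} ⊆ W satisfies d(S, G_1) = d(S, G_2) = (k − 1)/4; in particular d(S, G_1) + d(S, G_2) = (k − 1)/2 and d(S, G_1) − d(S, G_2) = 0. -/
lemma ncard_map_top_aux {α W : Type*} [Fintype α] [DecidableEq α] (f : α → W)
    (hf : Function.Injective f) :
    (Sym2.map f '' (⊤ : SimpleGraph α).edgeSet).ncard = (Fintype.card α).choose 2 := by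
  rw [Set.ncard_image_of_injective _ (Sym2.map.injective hf),
    ← SimpleGraph.coe_edgeFinset, Set.ncard_coe_finset,
    SimpleGraph.card_edgeFinset_top_eq_card_choose_two]

theorem stmt17 {VH : Type*} [Fintype VH] [DecidableEq VH]
    (H : SimpleGraph VH) (k : ℕ) (hk : 2 ≤ k)
    (C : Finset VH) (hC : H.IsNClique k C) :
    dens (G1 H k) (C.image Sum.inl ∪ (Finset.univ : Finset (Fin k)).image Sum.inr)
        = ((k : ℝ) - 1) / 4 ∧
    dens (G2 VH k) (C.image Sum.inl ∪ (Finset.univ : Finset (Fin k)).image Sum.inr)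
        = ((k : ℝ) - 1) / 4 ∧
    dens (G1 H k) (C.image Sum.inl ∪ (Finset.univ : Finset (Fin k)).image Sum.inr) +
      dens (G2 VH k) (C.image Sum.inl ∪ (Finset.univ : Finset (Fin k)).image Sum.inr)
        = ((k : ℝ) - 1) / 2 ∧
    dens (G1 H k) (C.image Sum.inl ∪ (Finset.univ : Finset (Fin k)).image Sum.inr) -
      dens (G2 VH k) (C.image Sum.inl ∪ (Finset.univ : Finset (Fin k)).image Sum.inr)
        = 0 := by
  set S : Finset (VH ⊕ Fin k) :=
    C.image Sum.inl ∪ (Finset.univ : Finset (Fin k)).image Sum.inr with hS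
  have hcard : S.card = 2 * k := by
    rw [hS, Finset.card_union_of_disjoint, Finset.card_image_of_injective _ Sum.inl_injective,
      Finset.card_image_of_injective _ Sum.inr_injective, Finset.card_univ, Fintype.card_fin,
      hC.card_eq]
    · ring
    · simp [Finset.disjoint_left]
  have hinrS : ∀ i : Fin k, (Sum.inr i : VH ⊕ Fin k) ∈ S := by
    intro i; simp [hS]
  have hinlS : ∀ u : VH, (Sum.inl u : VH ⊕ Fin k) ∈ S ↔ u ∈ C := by
    intro u; simp [hS]
  -- edge count of G2
  have h2 : edgeCnt (G2 VH k) S = k.choose 2 := by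
    have hset : {e ∈ (G2 VH k).edgeSet | ∀ v ∈ e, v ∈ S} =
        Sym2.map (fun i : Fin k => (Sum.inr i : VH ⊕ Fin k)) ''
          (⊤ : SimpleGraph (Fin k)).edgeSet := by
      ext e
      induction e using Sym2.ind with
      | _ a b =>
        simp only [Set.mem_setOf_eq, SimpleGraph.mem_edgeSet, G2, SimpleGraph.fromRel_adj,
          Sym2.mem_iff, Set.mem_image]
        constructor
        · rintro ⟨⟨hne, h | h⟩, hmem⟩
          · obtain ⟨i, j, rfl, rfl⟩ := h
            exact ⟨s(i, j), by simpa using fun h => hne (by rw [h]), by simp⟩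
          · obtain ⟨i, j, rfl, rfl⟩ := h
            exact ⟨s(j, i), by simpa using fun h => hne (by rw [h]), by simp [Sym2.eq_swap]⟩
        · rintro ⟨e', he', hmap⟩
          induction e' using Sym2.ind with
          | _ i j =>
            simp only [SimpleGraph.mem_edgeSet, SimpleGraph.top_adj] at he'
            simp only [Sym2.map_pair_eq, Sym2.eq_iff] at hmap
            rcases hmap with ⟨rfl, rfl⟩ | ⟨rfl, rfl⟩
            · exact ⟨⟨by simp [he'], Or.inl ⟨i, j, rfl, rfl⟩⟩,
                fun v hv => by rcases hv with rfl | rfl <;> exact hinrS _⟩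
            · exact ⟨⟨by simp [Ne.symm he'], Or.inl ⟨j, i, rfl, rfl⟩⟩,
                fun v hv => by rcases hv with rfl | rfl <;> exact hinrS _⟩
    rw [edgeCnt, hset, ncard_map_top_aux _ (fun i j h => Sum.inr_injective h), Fintype.card_fin]
  -- edge count of G1
  have h1 : edgeCnt (G1 H k) S = k.choose 2 := by
    have hset : {e ∈ (G1 H k).edgeSet | ∀ v ∈ e, v ∈ S} =
        Sym2.map (fun x : {v // v ∈ C} => (Sum.inl x.1 : VH ⊕ Fin k)) ''
          (⊤ : SimpleGraph {v // v ∈ C}).edgeSet := by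
      ext e
      induction e using Sym2.ind with
      | _ a b =>
        simp only [Set.mem_setOf_eq, SimpleGraph.mem_edgeSet, G1, SimpleGraph.fromRel_adj,
          Sym2.mem_iff, Set.mem_image]
        constructor
        · rintro ⟨⟨hne, h | h⟩, hmem⟩
          · obtain ⟨u, v, rfl, rfl, _⟩ := h
            have hu : u ∈ C := (hinlS u).1 (hmem _ (Or.inl rfl))
            have hv : v ∈ C := (hinlS v).1 (hmem _ (Or.inr rfl))
            refine ⟨s(⟨u, hu⟩, ⟨v, hv⟩), ?_, by simp⟩
            simp only [SimpleGraph.mem_edgeSet, SimpleGraph.top_adj]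
            exact fun h => hne (by simp [Subtype.ext_iff] at h; rw [h])
          · obtain ⟨u, v, rfl, rfl, _⟩ := h
            have hu : u ∈ C := (hinlS u).1 (hmem _ (Or.inr rfl))
            have hv : v ∈ C := (hinlS v).1 (hmem _ (Or.inl rfl))
            refine ⟨s(⟨v, hv⟩, ⟨u, hu⟩), ?_, by simp⟩
            simp only [SimpleGraph.mem_edgeSet, SimpleGraph.top_adj]
            exact fun h => hne (by simp [Subtype.ext_iff] at h; rw [h])
        · rintro ⟨e', he', hmap⟩
          induction e' using Sym2.ind with
          | _ x y =>
            simp only [SimpleGraph.mem_edgeSet, SimpleGraph.top_adj] at he'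
            have hxy : x.1 ≠ y.1 := fun h => he' (Subtype.ext h)
            have hadj : H.Adj x.1 y.1 := hC.1 x.2 y.2 hxy
            simp only [Sym2.map_pair_eq, Sym2.eq_iff] at hmap
            rcases hmap with ⟨rfl, rfl⟩ | ⟨rfl, rfl⟩
            · exact ⟨⟨by simp [hxy], Or.inl ⟨x.1, y.1, rfl, rfl, hadj⟩⟩,
                fun v hv => by
                  rcases hv with rfl | rfl
                  exacts [(hinlS _).2 x.2, (hinlS _).2 y.2]⟩
            · exact ⟨⟨by simp [Ne.symm hxy], Or.inl ⟨y.1, x.1, rfl, rfl, hadj.symm⟩⟩,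
                fun v hv => by
                  rcases hv with rfl | rfl
                  exacts [(hinlS _).2 y.2, (hinlS _).2 x.2]⟩
    rw [edgeCnt, hset,
      ncard_map_top_aux _ (fun x y h => Subtype.ext (Sum.inl_injective h)),
      Fintype.card_coe, hC.card_eq]
  have hk0 : (k : ℝ) ≠ 0 := by positivity
  have hdens : ∀ G : SimpleGraph (VH ⊕ Fin k), edgeCnt G S = k.choose 2 →
      dens G S = ((k : ℝ) - 1) / 4 := by
    intro G hG
    rw [dens, hG, hcard, Nat.cast_choose_two]
    push_cast
    field_simp
    ring
  have d1 := hdens _ h1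
  have d2 := hdens _ h2
  refine ⟨d1, d2, ?_, ?_⟩ <;> rw [d1, d2] <;> ring
end
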